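/- Let β₁, β₂ ∈ (0,1) satisfy (1−β₁)(1+β₂) < 1 (equivalently, β₁ > 1/2, or β₁ ≤ 1/2 and β₂ < 1/(1−β₁) − 1). Then the basin B(A₀) has positive two-dimensional Lebesgue measure, m₂(B(A₀)) > 0. -/

import Mathlib

open MeasureTheory Filter Set

noncomputable section

/-- The fiber map `g₁,β(y) = y + y(1-y)(y-β)`. -/
def g1 (β y : ℝ) : ℝ := y + y * (1 - y) * (y - β)

/-- The fiber map `g₂,β(y) = y - y(1-y)(y-β)`. -/
def g2 (β y : ℝ) : ℝ := y - y * (1 - y) * (y - β)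

/-- The doubling map on `[0,1]`. -/
def dbl (x : ℝ) : ℝ := if x ≤ 1/2 then 2*x else 2*x - 1

/-- The skew product `F(x,y) = (f(x), g₁,β₁(y))` for `x ≤ 1/2` and
`F(x,y) = (f(x), g₂,β₂(y))` for `x > 1/2`. -/
def Fsk (β1 β2 : ℝ) (p : ℝ × ℝ) : ℝ × ℝ :=
  if p.1 ≤ 1/2 then (dbl p.1, g1 β1 p.2) else (dbl p.1, g2 β2 p.2)

/-- The unit square `[0,1]²`. -/
def unitSq : Set (ℝ × ℝ) := Set.Icc (0:ℝ) 1 ×ˢ Set.Icc (0:ℝ) 1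

/-- The basin of points of `[0,1]²` whose second coordinate tends to `c` under iteration
of the skew product. -/
def basin (β1 β2 c : ℝ) : Set (ℝ × ℝ) :=
  {p | p ∈ unitSq ∧ Tendsto (fun n : ℕ => ((Fsk β1 β2)^[n] p).2) atTop (nhds c)}

open scoped ENNReal

lemma measurable_dbl : Measurable dbl := by
  unfold dbl
  exact Measurable.ite (measurableSet_le measurable_id measurable_const)
    (measurable_id.const_mul 2) ((measurable_id.const_mul 2).sub measurable_const)

lemma g1_bound {β1 ε y : ℝ} (hβ : β1 ∈ Ioo (0:ℝ) 1) (hε : ε ≤ 1) (hy : y ∈ Icc 0 ε) :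
    g1 β1 y ∈ Icc 0 ((1 - β1 + ε * (1 + β1)) * y) := by
  obtain ⟨hb0, hb1⟩ := hβ
  obtain ⟨hy0, hyε⟩ := hy
  have hy1 : y ≤ 1 := hyε.trans hε
  unfold g1
  constructor
  · nlinarith [mul_nonneg hy0 (sub_nonneg.2 hy1), mul_nonneg hy0 hb0.le]
  · nlinarith [mul_nonneg hy0 (sub_nonneg.2 hyε), mul_nonneg hy0 hy0, sq_nonneg y]

lemma g2_bound {β2 y : ℝ} (hβ : β2 ∈ Ioo (0:ℝ) 1) (hy : y ∈ Icc (0:ℝ) 1) :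
    g2 β2 y ∈ Icc 0 ((1 + β2) * y) := by
  obtain ⟨hb0, hb1⟩ := hβ
  obtain ⟨hy0, hy1⟩ := hy
  unfold g2
  constructor
  · nlinarith [mul_nonneg hy0 (sub_nonneg.2 hy1), sq_nonneg (1 - 2*y)]
  · nlinarith [mul_nonneg hy0 (sub_nonneg.2 hy1), mul_nonneg hy0 hy0]

lemma exists_t {a b : ℝ} (ha : 0 < a) (hb : 0 < b) (hab : a * b < 1) :
    ∃ t : ℝ, 0 < t ∧ a ^ t + b ^ t < 2 := by
  set f : ℝ → ℝ := fun s => a ^ s + b ^ s with hf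
  have hd : HasDerivAt f (a ^ (0:ℝ) * Real.log a + b ^ (0:ℝ) * Real.log b) 0 :=
    ((Real.hasStrictDerivAt_const_rpow ha 0).hasDerivAt).add
      ((Real.hasStrictDerivAt_const_rpow hb 0).hasDerivAt)
  have hL : a ^ (0:ℝ) * Real.log a + b ^ (0:ℝ) * Real.log b < 0 := by
    rw [Real.rpow_zero, Real.rpow_zero, one_mul, one_mul, ← Real.log_mul ha.ne' hb.ne']
    exact Real.log_neg (mul_pos ha hb) hab
  rw [hasDerivAt_iff_tendsto_slope] at hd
  have hev : ∀ᶠ s in nhdsWithin (0:ℝ) {0}ᶜ, slope f 0 s < 0 := hd.eventually_lt_const hL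
  have hmono : nhdsWithin (0:ℝ) (Ioi 0) ≤ nhdsWithin 0 {0}ᶜ :=
    nhdsWithin_mono _ (fun x hx => ne_of_gt hx)
  obtain ⟨t, hts, htpos⟩ := ((hev.filter_mono hmono).and self_mem_nhdsWithin).exists
  refine ⟨t, htpos, ?_⟩
  have hslope : slope f 0 t = (f t - f 0) / t := by
    rw [slope_def_field]; ring_nf
  rw [hslope] at hts
  have hf0 : f 0 = 2 := by simp [hf, Real.rpow_zero]; norm_num
  have hlt : f t - f 0 < 0 := by
    by_contra hcon
    push_neg at hcon
    have : 0 ≤ (f t - f 0) / t := div_nonneg hcon (le_of_lt htpos)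
    linarith
  have h2 : f t < 2 := by rw [← hf0]; linarith
  exact h2

/-- The weight cocycle along the doubling map. -/
def prodW (a b : ℝ) (n : ℕ) (x : ℝ) : ℝ :=
  ∏ k ∈ Finset.range n, (if dbl^[k] x ≤ 1/2 then a else b)

lemma prodW_zero (a b x : ℝ) : prodW a b 0 x = 1 := by simp [prodW]

lemma prodW_succ (a b : ℝ) (n : ℕ) (x : ℝ) :
    prodW a b (n+1) x = prodW a b n x * (if dbl^[n] x ≤ 1/2 then a else b) :=
  Finset.prod_range_succ _ _

lemma prodW_succ' (a b : ℝ) (n : ℕ) (x : ℝ) :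
    prodW a b (n+1) x = (if x ≤ 1/2 then a else b) * prodW a b n (dbl x) := by
  unfold prodW
  rw [Finset.prod_range_succ']
  simp only [Function.iterate_succ_apply, Function.iterate_zero_apply]
  rw [mul_comm]
  rfl

lemma prodW_nonneg {a b : ℝ} (ha : 0 ≤ a) (hb : 0 ≤ b) (n : ℕ) (x : ℝ) :
    0 ≤ prodW a b n x :=
  Finset.prod_nonneg fun _ _ => by split <;> assumption

lemma measurable_prodW (a b : ℝ) (n : ℕ) : Measurable (prodW a b n) := by
  unfold prodW
  refine Finset.measurable_prod _ fun k _ => ?_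
  exact Measurable.ite
    (measurableSet_le (measurable_dbl.iterate k) measurable_const)
    measurable_const measurable_const

lemma key_lintegral {φ : ℝ → ℝ≥0∞} (hφ : Measurable φ) (u v : ℝ≥0∞) :
    ∫⁻ x in Icc (0:ℝ) 1, (if x ≤ 1/2 then u else v) * φ (dbl x)
      = ((u + v) / 2) * ∫⁻ x in Icc (0:ℝ) 1, φ x := by
  have h2 : (ENNReal.ofReal |(2:ℝ)⁻¹|) = 2⁻¹ := by
    rw [abs_of_pos (by norm_num : (0:ℝ) < 2⁻¹)]
    rw [ENNReal.ofReal_inv_of_pos (by norm_num : (0:ℝ) < 2), ENNReal.ofReal_ofNat]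
  have hsplit : Icc (0:ℝ) 1 = Icc 0 (1/2) ∪ Ioc (1/2) 1 :=
    (Icc_union_Ioc_eq_Icc (by norm_num) (by norm_num)).symm
  have hdisj : Disjoint (Icc (0:ℝ) (1/2)) (Ioc (1/2) 1) := by
    rw [Set.disjoint_left]
    rintro x ⟨_, h1⟩ ⟨h2, _⟩
    linarith
  rw [hsplit, lintegral_union measurableSet_Ioc hdisj]
  -- first piece
  have e1 : ∫⁻ x in Icc (0:ℝ) (1/2), (if x ≤ 1/2 then u else v) * φ (dbl x)
      = u * ∫⁻ x in Icc (0:ℝ) (1/2), φ (2*x) := by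
    rw [← lintegral_const_mul u (show Measurable fun x : ℝ => φ (2*x) from hφ.comp (measurable_const_mul 2))]
    refine setLIntegral_congr_fun measurableSet_Icc (fun x hx => ?_)
    beta_reduce
    have hx2 : x ≤ 1/2 := hx.2
    rw [if_pos hx2]
    congr 1
    unfold dbl
    rw [if_pos hx2]
  have e2 : ∫⁻ x in Ioc (1/2:ℝ) 1, (if x ≤ 1/2 then u else v) * φ (dbl x)
      = v * ∫⁻ x in Ioc (1/2:ℝ) 1, φ (2*x - 1) := by
    rw [← lintegral_const_mul v (show Measurable fun x : ℝ => φ (2*x-1) from hφ.comp ((measurable_const_mul 2).sub measurable_const))]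
    refine setLIntegral_congr_fun measurableSet_Ioc (fun x hx => ?_)
    beta_reduce
    have hx2 : ¬ x ≤ 1/2 := not_le.2 hx.1
    rw [if_neg hx2]
    congr 1
    unfold dbl
    rw [if_neg hx2]
  -- change of variables for first piece
  have m1 : Measure.map (fun x : ℝ => 2*x) (volume.restrict (Icc 0 (1/2)))
      = (2⁻¹ : ℝ≥0∞) • volume.restrict (Icc 0 1) := by
    have hpre : (fun x : ℝ => 2*x) ⁻¹' Icc 0 1 = Icc 0 (1/2) := by
      ext x; simp only [mem_preimage, mem_Icc]; constructor <;> intro h <;> constructor <;> linarith [h.1, h.2]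
    rw [← hpre, ← Measure.restrict_map (measurable_const_mul 2) measurableSet_Icc,
      Real.map_volume_mul_left (by norm_num : (2:ℝ) ≠ 0), h2, Measure.restrict_smul]
  have c1 : ∫⁻ x in Icc (0:ℝ) (1/2), φ (2*x) = 2⁻¹ * ∫⁻ x in Icc (0:ℝ) 1, φ x := by
    rw [← lintegral_map hφ (measurable_const_mul 2), m1, lintegral_smul_measure, smul_eq_mul]
  -- change of variables for second piece
  have mm : Measure.map (fun x : ℝ => 2*x - 1) volume = (2⁻¹ : ℝ≥0∞) • volume := by
    have : (fun x : ℝ => 2*x - 1) = (fun y : ℝ => y + (-1)) ∘ (fun x : ℝ => 2*x) := by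
      funext x; simp [sub_eq_add_neg]
    rw [this, ← Measure.map_map (measurable_add_const (-1)) (measurable_const_mul 2),
      Real.map_volume_mul_left (by norm_num : (2:ℝ) ≠ 0), h2, Measure.map_smul,
      map_add_right_eq_self volume (-1)]
  have m2 : Measure.map (fun x : ℝ => 2*x - 1) (volume.restrict (Ioc (1/2) 1))
      = (2⁻¹ : ℝ≥0∞) • volume.restrict (Ioc 0 1) := by
    have hpre : (fun x : ℝ => 2*x - 1) ⁻¹' Ioc 0 1 = Ioc (1/2) 1 := by
      ext x; simp only [mem_preimage, mem_Ioc]; constructor <;> intro h <;> constructor <;> linarith [h.1, h.2]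
    rw [← hpre, ← Measure.restrict_map (show Measurable fun x : ℝ => 2*x-1 from (measurable_const_mul 2).sub measurable_const) measurableSet_Ioc,
      mm, Measure.restrict_smul]
  have c2 : ∫⁻ x in Ioc (1/2:ℝ) 1, φ (2*x - 1) = 2⁻¹ * ∫⁻ x in Icc (0:ℝ) 1, φ x := by
    rw [← lintegral_map hφ (show Measurable fun x : ℝ => 2*x-1 from (measurable_const_mul 2).sub measurable_const), m2,
      lintegral_smul_measure, smul_eq_mul, Measure.restrict_congr_set Ioc_ae_eq_Icc]
  rw [e1, e2, c1, c2, ← hsplit, ENNReal.div_eq_inv_mul]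
  ring

lemma lint_prodW {a b : ℝ} (ha : 0 ≤ a) (hb : 0 ≤ b) (t : ℝ) :
    ∀ n : ℕ, ∫⁻ x in Icc (0:ℝ) 1, ENNReal.ofReal (prodW a b n x ^ t)
      = ((ENNReal.ofReal (a^t) + ENNReal.ofReal (b^t))/2)^n := by
  intro n
  induction n with
  | zero =>
    simp only [prodW_zero, Real.one_rpow, ENNReal.ofReal_one, pow_zero]
    rw [setLIntegral_one, Real.volume_Icc]
    norm_num
  | succ n ih =>
    have hw : ∀ x : ℝ, (0:ℝ) ≤ if x ≤ 1/2 then a else b := fun x => by split <;> assumption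
    have hrec : ∀ x : ℝ, ENNReal.ofReal (prodW a b (n+1) x ^ t)
        = (if x ≤ 1/2 then ENNReal.ofReal (a^t) else ENNReal.ofReal (b^t))
          * ENNReal.ofReal (prodW a b n (dbl x) ^ t) := by
      intro x
      rw [prodW_succ', Real.mul_rpow (hw x) (prodW_nonneg ha hb _ _),
        ENNReal.ofReal_mul (Real.rpow_nonneg (hw x) t)]
      congr 1
      split <;> rfl
    have hp : Measurable fun x : ℝ => prodW a b n x ^ t := by
      have := measurable_prodW a b n
      measurability
    have hφ : Measurable fun x : ℝ => ENNReal.ofReal (prodW a b n x ^ t) :=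
      hp.ennreal_ofReal
    simp only [hrec]
    rw [key_lintegral hφ, ih, pow_succ, mul_comm]

lemma Fsk_iter {β1 β2 ε x y : ℝ} (hβ1 : β1 ∈ Ioo (0:ℝ) 1) (hβ2 : β2 ∈ Ioo (0:ℝ) 1)
    (hε1 : ε ≤ 1) (hy : 0 ≤ y)
    (hbnd : ∀ n, y * prodW (1-β1+ε*(1+β1)) (1+β2) n x ≤ ε) (n : ℕ) :
    ((Fsk β1 β2)^[n] (x,y)).1 = dbl^[n] x ∧
      ((Fsk β1 β2)^[n] (x,y)).2 ∈ Icc 0 (y * prodW (1-β1+ε*(1+β1)) (1+β2) n x) := by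
  set a := 1-β1+ε*(1+β1) with hadef
  set b := 1+β2 with hbdef
  have hε0 : 0 ≤ ε := by
    have h := hbnd 0
    rw [prodW_zero, mul_one] at h
    linarith
  have ha0 : 0 ≤ a := by
    have h1 : 0 ≤ ε * (1+β1) := mul_nonneg hε0 (by nlinarith [hβ1.1])
    nlinarith [hβ1.2]
  have hb0 : (0:ℝ) ≤ b := by nlinarith [hβ2.1]
  induction n with
  | zero => simp [prodW_zero, hy]
  | succ n ih =>
    obtain ⟨ih1, ih2⟩ := ih
    set P := (Fsk β1 β2)^[n] (x,y) with hP
    have hYε : P.2 ∈ Icc 0 ε := ⟨ih2.1, ih2.2.trans (hbnd n)⟩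
    have hY1 : P.2 ∈ Icc (0:ℝ) 1 := ⟨ih2.1, hYε.2.trans hε1⟩
    rw [Function.iterate_succ_apply', ← hP]
    unfold Fsk
    by_cases hc : P.1 ≤ 1/2
    · rw [if_pos hc]
      refine ⟨by rw [Function.iterate_succ_apply', ih1], ?_⟩
      have hg := g1_bound hβ1 hε1 hYε
      refine ⟨hg.1, hg.2.trans ?_⟩
      rw [prodW_succ, ← ih1, if_pos hc]
      calc a * P.2 ≤ a * (y * prodW a b n x) := mul_le_mul_of_nonneg_left ih2.2 ha0
        _ = y * (prodW a b n x * a) := by ring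
    · rw [if_neg hc]
      refine ⟨by rw [Function.iterate_succ_apply', ih1], ?_⟩
      have hg := g2_bound hβ2 hY1
      refine ⟨hg.1, hg.2.trans ?_⟩
      rw [prodW_succ, ← ih1, if_neg hc]
      calc b * P.2 ≤ b * (y * prodW a b n x) := mul_le_mul_of_nonneg_left ih2.2 hb0
        _ = y * (prodW a b n x * b) := by ring

theorem stmt5 (β1 β2 : ℝ) (hβ1 : β1 ∈ Set.Ioo (0:ℝ) 1) (hβ2 : β2 ∈ Set.Ioo (0:ℝ) 1)
    (hcond : (1 - β1) * (1 + β2) < 1) :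
    0 < volume (basin β1 β2 0) := by
  obtain ⟨hb10, hb11⟩ := hβ1
  obtain ⟨hb20, hb21⟩ := hβ2
  set ε : ℝ := (1 - (1 - β1) * (1 + β2)) / (2 * (1 + β1) * (1 + β2)) with hεdef
  have hden : (0:ℝ) < 2 * (1 + β1) * (1 + β2) := by nlinarith
  have hεpos : 0 < ε := div_pos (by linarith) hden
  have hεkey : ε * (2 * (1 + β1) * (1 + β2)) = 1 - (1 - β1) * (1 + β2) := by
    rw [hεdef]; field_simp
  have hε1 : ε ≤ 1 := by nlinarith [hεkey, mul_pos (mul_pos (by norm_num : (0:ℝ)<2) (by linarith : (0:ℝ)<1+β1)) (by linarith : (0:ℝ)<1+β2)]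
  set a : ℝ := 1 - β1 + ε * (1 + β1) with hadef
  set b : ℝ := 1 + β2 with hbdef
  have ha : 0 < a := by nlinarith [mul_pos hεpos (by linarith : (0:ℝ) < 1 + β1)]
  have hbp : (0:ℝ) < b := by nlinarith
  have hab : a * b < 1 := by nlinarith [hεkey]
  obtain ⟨t, htpos, hsum2⟩ := exists_t ha hbp hab
  set u := ENNReal.ofReal (a^t) with hudef
  set v := ENNReal.ofReal (b^t) with hvdef
  set c := (u + v) / 2 with hcdef
  have hat : 0 ≤ a^t := Real.rpow_nonneg ha.le t
  have hbt : 0 ≤ b^t := Real.rpow_nonneg hbp.le t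
  have hc1 : c < 1 := by
    rw [hcdef, hudef, hvdef, ← ENNReal.ofReal_add hat hbt]
    rw [ENNReal.div_lt_iff (Or.inl (by norm_num : (2:ℝ≥0∞) ≠ 0)) (Or.inl (by norm_num : (2:ℝ≥0∞) ≠ ⊤))]
    rw [one_mul, show (2:ℝ≥0∞) = ENNReal.ofReal 2 by norm_num]
    exact (ENNReal.ofReal_lt_ofReal_iff (by norm_num)).2 hsum2
  set h : ℝ → ℝ≥0∞ := fun x => ∑' n : ℕ, ENNReal.ofReal (prodW a b n x ^ t) with hhdef
  have hmeas_n : ∀ n : ℕ, Measurable fun x : ℝ => ENNReal.ofReal (prodW a b n x ^ t) := by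
    intro n
    have hp : Measurable fun x : ℝ => prodW a b n x ^ t := by
      have := measurable_prodW a b n
      measurability
    exact hp.ennreal_ofReal
  have hmeas : Measurable h := Measurable.ennreal_tsum hmeas_n
  have hint : ∫⁻ x in Icc (0:ℝ) 1, h x = ∑' n : ℕ, c^n := by
    rw [hhdef]
    rw [lintegral_tsum (fun n => (hmeas_n n).aemeasurable)]
    exact tsum_congr fun n => lint_prodW ha.le hbp.le t n
  have hfin : ∫⁻ x in Icc (0:ℝ) 1, h x ≠ ⊤ := by
    rw [hint, ENNReal.tsum_geometric]
    exact ENNReal.inv_ne_top.2 (by simp [tsub_eq_zero_iff_le, not_le, hc1])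
  have hae := ae_lt_top hmeas hfin
  rw [ae_iff] at hae
  have hnullset : MeasurableSet {x : ℝ | ¬ h x < ⊤} :=
    (measurableSet_lt hmeas measurable_const).compl
  rw [Measure.restrict_apply hnullset] at hae
  set s : ℕ → Set ℝ := fun N => {x | x ∈ Icc (0:ℝ) 1 ∧ h x ≤ N} with hsdef
  have hcover : Icc (0:ℝ) 1 ⊆ ({x : ℝ | ¬ h x < ⊤} ∩ Icc 0 1) ∪ ⋃ N, s N := by
    intro x hx
    by_cases hx2 : h x < ⊤
    · right
      obtain ⟨N, hN⟩ := ENNReal.exists_nat_gt hx2.ne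
      exact mem_iUnion.2 ⟨N, hx, hN.le⟩
    · left; exact ⟨hx2, hx⟩
  have hone : (1:ℝ≥0∞) ≤ ∑' N : ℕ, volume (s N) := by
    have h1 : volume (Icc (0:ℝ) 1) = 1 := by
      rw [Real.volume_Icc]; norm_num
    calc (1:ℝ≥0∞) = volume (Icc (0:ℝ) 1) := h1.symm
      _ ≤ volume (({x : ℝ | ¬ h x < ⊤} ∩ Icc 0 1) ∪ ⋃ N, s N) := measure_mono hcover
      _ ≤ volume ({x : ℝ | ¬ h x < ⊤} ∩ Icc 0 1) + volume (⋃ N, s N) := measure_union_le _ _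
      _ = volume (⋃ N, s N) := by rw [hae, zero_add]
      _ ≤ ∑' N : ℕ, volume (s N) := measure_iUnion_le _
  have hexN : ∃ N : ℕ, volume (s N) ≠ 0 := by
    by_contra hcon
    push_neg at hcon
    rw [tsum_congr (fun N => hcon N), tsum_zero] at hone
    simp at hone
  obtain ⟨N, hN⟩ := hexN
  set C : ℝ := (N:ℝ) ^ t⁻¹ with hCdef
  have hC0 : 0 ≤ C := Real.rpow_nonneg (Nat.cast_nonneg N) _
  have hCprod : ∀ x ∈ s N, ∀ n : ℕ, prodW a b n x ≤ C := by
    intro x hx n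
    have h1 : ENNReal.ofReal (prodW a b n x ^ t) ≤ (N : ℝ≥0∞) :=
      le_trans (ENNReal.le_tsum n) hx.2
    have h2 : prodW a b n x ^ t ≤ (N:ℝ) := by
      rw [← ENNReal.ofReal_natCast] at h1
      exact (ENNReal.ofReal_le_ofReal_iff (Nat.cast_nonneg N)).1 h1
    calc prodW a b n x = (prodW a b n x ^ t) ^ t⁻¹ :=
          (Real.rpow_rpow_inv (prodW_nonneg ha.le hbp.le n x) htpos.ne').symm
      _ ≤ C := Real.rpow_le_rpow (Real.rpow_nonneg (prodW_nonneg ha.le hbp.le n x) t) h2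
          (inv_nonneg.2 htpos.le)
  have hCtend : ∀ x ∈ s N, Tendsto (fun n : ℕ => prodW a b n x) atTop (nhds 0) := by
    intro x hx
    have hne : h x ≠ ⊤ := (lt_of_le_of_lt hx.2 (ENNReal.natCast_lt_top N)).ne
    have t1 : Tendsto (fun n : ℕ => ENNReal.ofReal (prodW a b n x ^ t)) atTop (nhds 0) :=
      ENNReal.tendsto_atTop_zero_of_tsum_ne_top hne
    have t2 : Tendsto (fun n : ℕ => prodW a b n x ^ t) atTop (nhds 0) := by
      have t2' := (ENNReal.tendsto_toReal (by simp : (0:ℝ≥0∞) ≠ ⊤)).comp t1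
      simp only [ENNReal.toReal_zero] at t2'
      refine t2'.congr fun n => ?_
      exact ENNReal.toReal_ofReal (Real.rpow_nonneg (prodW_nonneg ha.le hbp.le n x) t)
    have t3 := ((Real.continuousAt_rpow_const 0 t⁻¹ (Or.inr (inv_nonneg.2 htpos.le))).tendsto).comp t2
    rw [Real.zero_rpow (inv_ne_zero htpos.ne')] at t3
    refine t3.congr fun n => ?_
    exact Real.rpow_rpow_inv (prodW_nonneg ha.le hbp.le n x) htpos.ne'
  set y0 : ℝ := ε / (C + 1) with hy0def
  have hy0pos : 0 < y0 := div_pos hεpos (by linarith)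
  have hy0ε : y0 ≤ ε := by
    rw [hy0def]
    rw [div_le_iff₀ (by linarith : (0:ℝ) < C + 1)]
    nlinarith
  have hy0le1 : y0 ≤ 1 := hy0ε.trans hε1
  have hsub : (s N) ×ˢ Icc (0:ℝ) y0 ⊆ basin β1 β2 0 := by
    rintro ⟨x, y⟩ ⟨hxs, hy⟩
    have hy0' : 0 ≤ y := hy.1
    have hbnd : ∀ n : ℕ, y * prodW a b n x ≤ ε := by
      intro n
      calc y * prodW a b n x ≤ y0 * C :=
            mul_le_mul hy.2 (hCprod x hxs n) (prodW_nonneg ha.le hbp.le n x) hy0pos.le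
        _ ≤ ε := by
            rw [hy0def, div_mul_eq_mul_div, div_le_iff₀ (by linarith : (0:ℝ) < C + 1)]
            nlinarith
    have hiter := Fsk_iter ⟨hb10, hb11⟩ ⟨hb20, hb21⟩ hε1 hy0' hbnd
    constructor
    · exact ⟨hxs.1, hy.1, hy.2.trans hy0le1⟩
    · have hupper : Tendsto (fun n : ℕ => y * prodW a b n x) atTop (nhds 0) := by
        have := (hCtend x hxs).const_mul y
        simpa using this
      exact tendsto_of_tendsto_of_tendsto_of_le_of_le tendsto_const_nhds hupper
        (fun n => (hiter n).2.1) (fun n => (hiter n).2.2)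
  have hvol : volume ((s N) ×ˢ Icc (0:ℝ) y0) = volume (s N) * ENNReal.ofReal y0 := by
    rw [Measure.volume_eq_prod, Measure.prod_prod, Real.volume_Icc, sub_zero]
  refine lt_of_lt_of_le ?_ (measure_mono hsub)
  rw [hvol]
  exact ENNReal.mul_pos hN (by simp [ENNReal.ofReal_pos.2 hy0pos, (ENNReal.ofReal_pos.2 hy0pos).ne'])
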